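/- The erasing map is a monoid morphism: for disjoint finite sets R and Σ, the map erase_Σ : (R → (Σ ∪ R)*) → (R → R*), which post-composes each assignment with the morphism deleting all letters of Σ, is a monoid morphism from the monoid of register assignments (under the composition α • β = α⊙ ∘ β) to the monoid of assignments over the empty alphabet, and it sends copyless assignments to copyless assignments. -/

import Mathlib

/-- Morphism extension `α⊙` of a register assignment, fixing output letters of `S`. -/
def assignExt {S R : Type*} (α : R → List (S ⊕ R)) : S ⊕ R → List (S ⊕ R)
  | Sum.inl c => [Sum.inl c]
  | Sum.inr r => α r

/-- Composition of register assignments over the alphabet `S`. -/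
def assignComp {S R : Type*} (α β : R → List (S ⊕ R)) : R → List (S ⊕ R) :=
  fun r => (β r).flatMap (assignExt α)

/-- Composition of register assignments over the empty alphabet. -/
def assignComp0 {R : Type*} (α β : R → List R) : R → List R :=
  fun r => (β r).flatMap α

/-- Copylessness over the alphabet `S`. -/
def Copyless {S R : Type*} [Fintype R] [DecidableEq S] [DecidableEq R]
    (α : R → List (S ⊕ R)) : Prop :=
  ∀ r : R, (∑ r' : R, List.count ((Sum.inr r : S ⊕ R)) (α r')) ≤ 1

/-- Copylessness over the empty alphabet. -/
def Copyless0 {R : Type*} [Fintype R] [DecidableEq R] (α : R → List R) : Prop :=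
  ∀ r : R, (∑ r' : R, List.count r (α r')) ≤ 1

/-- `erase_Σ`: delete all letters of `S` from the values of an assignment. -/
def eraseS {S R : Type*} (α : R → List (S ⊕ R)) : R → List R :=
  fun r => (α r).filterMap (fun x => match x with | Sum.inl _ => none | Sum.inr r' => some r')

private lemma filterMap_bind_ext {S R : Type*} (α : R → List (S ⊕ R)) (l : List (S ⊕ R)) :
    (l.flatMap (assignExt α)).filterMap
      (fun x => match x with | Sum.inl _ => none | Sum.inr r' => some r')
    = (l.filterMap
        (fun x => match x with | Sum.inl _ => none | Sum.inr r' => some r')).flatMap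
        (eraseS α) := by
  induction l with
  | nil => rfl
  | cons x xs ih =>
    cases x with
    | inl c => simpa [assignExt] using ih
    | inr r => simp [assignExt, eraseS, ih]

private lemma beq_inr_inr {S R : Type*} [DecidableEq S] [DecidableEq R] (a b : R) :
    ((Sum.inr a : S ⊕ R) == Sum.inr b) = (a == b) := rfl

private lemma count_eraseS {S R : Type*} [DecidableEq S] [DecidableEq R]
    (r : R) (l : List (S ⊕ R)) :
    (l.filterMap
        (fun x => match x with | Sum.inl _ => none | Sum.inr r' => some r')).count r
    = l.count (Sum.inr r : S ⊕ R) := by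
  induction l with
  | nil => rfl
  | cons x xs ih =>
    cases x with
    | inl c =>
      have hc : ((Sum.inl c : S ⊕ R) == Sum.inr r) = false := rfl
      simpa [List.count_cons, hc] using ih
    | inr r' =>
      simp only [List.filterMap_cons, List.count_cons, ih]
      by_cases h : r' = r <;> simp [h, beq_inr_inr]

theorem erase_monoidHom {S R : Type*} [Fintype R] [DecidableEq S] [DecidableEq R] :
    (∀ α β : R → List (S ⊕ R), eraseS (assignComp α β) = assignComp0 (eraseS α) (eraseS β)) ∧
    (eraseS (fun r : R => [(Sum.inr r : S ⊕ R)]) = fun r : R => [r]) ∧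
    (∀ α : R → List (S ⊕ R), Copyless α → Copyless0 (eraseS α)) := by
  refine ⟨?_, ?_, ?_⟩
  · intro α β
    funext r
    simpa [eraseS, assignComp, assignComp0] using filterMap_bind_ext α (β r)
  · rfl
  · intro α hα r
    have := hα r
    simpa [Copyless0, eraseS, count_eraseS] using this
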